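/- Let n ≥ 4 be even and let W ⊆ V(H_n) contain the entire row R_1 = {0,…,n−1} × {1}. Then the graph H_n(W) obtained by replicating W is not 4-colourable. -/

import Mathlib

/-- Replicating a set `W` of vertices of `G`: each `w ∈ W` gets a clone (the
corresponding element of `Sum.inr`) adjacent to `w` and to all its neighbours. -/
def SimpleGraph.replicateSet {V : Type} (G : SimpleGraph V) (W : Set V) :
    SimpleGraph (V ⊕ W) where
  Adj x y :=
    match x, y with
    | Sum.inl a, Sum.inl b => G.Adj a b
    | Sum.inl a, Sum.inr b => G.Adj a (b : V) ∨ a = (b : V)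
    | Sum.inr a, Sum.inl b => G.Adj (a : V) b ∨ (a : V) = b
    | Sum.inr a, Sum.inr b => G.Adj (a : V) (b : V)
  symm := by
    constructor
    rintro (a | a) (b | b) h <;> simp only at h ⊢ <;>
      first
        | exact G.adj_symm h
        | (rcases h with h | h
           · exact Or.inl (G.adj_symm h)
           · exact Or.inr h.symm)
  loopless := by
    constructor
    rintro (a | a) h <;> simp only at h <;> exact G.irrefl h

/-- Gallai's graph `H n`: the Cartesian product of the path on `Fin n` with the
triangle on `ZMod 3`, together with the three twist edges joining `(0, j)` to
`(n-1, -j)`. -/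
def Hgraph (n : ℕ) : SimpleGraph (Fin n × ZMod 3) :=
  SimpleGraph.fromRel (fun x y =>
    (x.1 = y.1 ∧ x.2 ≠ y.2) ∨
    ((x.1 : ℕ) + 1 = (y.1 : ℕ) ∧ x.2 = y.2) ∨
    ((x.1 : ℕ) = 0 ∧ (y.1 : ℕ) = n - 1 ∧ y.2 = -x.2))

/-- `G` is `k`-critical: `χ(G) = k` and deleting any vertex leaves a
`(k-1)`-colourable graph. -/
def SimpleGraph.IsCrit {V : Type} (G : SimpleGraph V) (k : ℕ) : Prop :=
  G.chromaticNumber = k ∧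
    ∀ v : V, (SimpleGraph.induce {u | u ≠ v} G).Colorable (k - 1)

/- Auxiliary lemmas -/

lemma key_even : ∀ p q x y z : Fin 4, p ≠ q → (x = p ∨ x = q) → (y = p ∨ y = q) →
    x ≠ y → z ≠ x → z ≠ y → ¬(z = p ∨ z = q) := by decide

lemma key_odd : ∀ p q x y z : Fin 4, p ≠ q → ¬(x = p ∨ x = q) → ¬(y = p ∨ y = q) →
    x ≠ y → z ≠ x → z ≠ y → (z = p ∨ z = q) := by decide


lemma replicateSet_adj_ll {V : Type} {G : SimpleGraph V} {W : Set V} {a b : V}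
    (hab : G.Adj a b) : (G.replicateSet W).Adj (Sum.inl a) (Sum.inl b) := hab

lemma replicateSet_adj_lr {V : Type} {G : SimpleGraph V} {W : Set V} {a : V} {b : W}
    (hab : G.Adj a b ∨ a = (b : V)) : (G.replicateSet W).Adj (Sum.inl a) (Sum.inr b) := hab

lemma replicateSet_adj_rl {V : Type} {G : SimpleGraph V} {W : Set V} {a : W} {b : V}
    (hab : G.Adj (a : V) b ∨ (a : V) = b) : (G.replicateSet W).Adj (Sum.inr a) (Sum.inl b) := hab

lemma replicateSet_adj_rr {V : Type} {G : SimpleGraph V} {W : Set V} {a b : W}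
    (hab : G.Adj (a : V) (b : V)) : (G.replicateSet W).Adj (Sum.inr a) (Sum.inr b) := hab

lemma Hgraph_adj_col {n : ℕ} (i : Fin n) {j j' : ZMod 3} (hjj : j ≠ j') :
    (Hgraph n).Adj (i, j) (i, j') := by
  rw [Hgraph, SimpleGraph.fromRel_adj]
  exact ⟨fun hc => hjj (congrArg Prod.snd hc), Or.inl (Or.inl ⟨rfl, hjj⟩)⟩

lemma Hgraph_adj_row {n : ℕ} {i : ℕ} (hi : i + 1 < n) (j : ZMod 3) :
    (Hgraph n).Adj (⟨i, by omega⟩, j) (⟨i + 1, hi⟩, j) := by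
  rw [Hgraph, SimpleGraph.fromRel_adj]
  refine ⟨fun hc => ?_, Or.inl (Or.inr (Or.inl ⟨rfl, rfl⟩))⟩
  simp [Prod.ext_iff, Fin.ext_iff] at hc

lemma Hgraph_adj_twist {n : ℕ} (hn : 4 ≤ n) :
    (Hgraph n).Adj (⟨0, by omega⟩, 1) (⟨n - 1, by omega⟩, 2) := by
  rw [Hgraph, SimpleGraph.fromRel_adj]
  refine ⟨fun hc => ?_, Or.inl (Or.inr (Or.inr ⟨rfl, rfl, (by decide : (2 : ZMod 3) = -1)⟩))⟩
  have := congrArg Prod.snd hc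
  simp at this
  exact absurd this (by decide)

/-- If `n ≥ 4` is even and `W` contains the whole row `R₁ = {0,…,n-1} × {1}`,
then the replicated graph is not 4-colourable. -/
theorem replicate_row_one_even (n : ℕ) (hn : 4 ≤ n) (heven : Even n)
    (W : Set (Fin n × ZMod 3))
    (h : {v : Fin n × ZMod 3 | v.2 = 1} ⊆ W) :
    ¬ ((Hgraph n).replicateSet W).Colorable 4 := by
  intro hcol
  obtain ⟨c⟩ := hcol
  have hpos : 0 < n := by omega
  let w : ∀ i : ℕ, i < n → W := fun i hi => ⟨((⟨i, hi⟩ : Fin n), (1 : ZMod 3)), h rfl⟩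
  let B : ∀ i : ℕ, i < n → Fin 4 := fun i hi => c (Sum.inl ((⟨i, hi⟩ : Fin n), (1 : ZMod 3)))
  let B' : ∀ i : ℕ, i < n → Fin 4 := fun i hi => c (Sum.inr (w i hi))
  -- within each column, the vertex and its clone get distinct colours
  have hBB' : ∀ i (hi : i < n), B i hi ≠ B' i hi := fun i hi =>
    c.valid (replicateSet_adj_lr (b := w i hi) (Or.inr rfl))
  have hpq : B 0 hpos ≠ B' 0 hpos := hBB' 0 hpos
  have main : ∀ i : ℕ, ∀ hi : i < n,
      (Even i → ((B i hi = B 0 hpos ∨ B i hi = B' 0 hpos) ∧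
                 (B' i hi = B 0 hpos ∨ B' i hi = B' 0 hpos))) ∧
      (Odd i → (¬(B i hi = B 0 hpos ∨ B i hi = B' 0 hpos) ∧
                ¬(B' i hi = B 0 hpos ∨ B' i hi = B' 0 hpos))) := by
    intro i
    induction i with
    | zero =>
      intro hi
      refine ⟨fun _ => ⟨Or.inl rfl, Or.inr rfl⟩, fun hodd => absurd hodd (by simp)⟩
    | succ i ih =>
      intro hi1
      have hi : i < n := by omega
      obtain ⟨ihe, iho⟩ := ih hi
      have hx : B i hi ≠ B' i hi := hBB' i hi
      have hrow := Hgraph_adj_row (n := n) hi1 (1 : ZMod 3)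
      have h1 : B (i + 1) hi1 ≠ B i hi :=
        (c.valid (replicateSet_adj_ll (W := W) hrow)).symm
      have h2 : B (i + 1) hi1 ≠ B' i hi :=
        (c.valid (replicateSet_adj_rl (a := w i hi) (Or.inl hrow))).symm
      have h3 : B' (i + 1) hi1 ≠ B i hi :=
        (c.valid (replicateSet_adj_lr (b := w (i + 1) hi1) (Or.inl hrow))).symm
      have h4 : B' (i + 1) hi1 ≠ B' i hi :=
        (c.valid (replicateSet_adj_rr (a := w i hi) (b := w (i + 1) hi1) hrow)).symm
      constructor
      · intro he
        have ho : Odd i := Nat.not_even_iff_odd.mp (Nat.even_add_one.mp he)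
        obtain ⟨hb, hb'⟩ := iho ho
        exact ⟨key_odd _ _ _ _ _ hpq hb hb' hx h1 h2,
               key_odd _ _ _ _ _ hpq hb hb' hx h3 h4⟩
      · intro ho
        have he : Even i := Nat.not_odd_iff_even.mp (Nat.odd_add_one.mp ho)
        obtain ⟨hb, hb'⟩ := ihe he
        exact ⟨key_even _ _ _ _ _ hpq hb hb' hx h1 h2,
               key_even _ _ _ _ _ hpq hb hb' hx h3 h4⟩
  have hn1 : n - 1 < n := by omega
  have hodd : Odd (n - 1) := Nat.Even.sub_odd (by omega) heven odd_one
  obtain ⟨hb, hb'⟩ := (main (n - 1) hn1).2 hodd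
  have hcol12 : (Hgraph n).Adj ((⟨n - 1, hn1⟩ : Fin n), (1 : ZMod 3)) (⟨n - 1, hn1⟩, 2) :=
    Hgraph_adj_col _ (by decide)
  have hd1 : c (Sum.inl ((⟨n - 1, hn1⟩ : Fin n), (2 : ZMod 3))) ≠ B (n - 1) hn1 :=
    (c.valid (replicateSet_adj_ll (W := W) hcol12)).symm
  have hd2 : c (Sum.inl ((⟨n - 1, hn1⟩ : Fin n), (2 : ZMod 3))) ≠ B' (n - 1) hn1 :=
    (c.valid (replicateSet_adj_rl (a := w (n - 1) hn1) (Or.inl hcol12))).symm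
  have hdP := key_odd _ _ _ _ _ hpq hb hb' (hBB' _ _) hd1 hd2
  have htwist := Hgraph_adj_twist (n := n) hn
  have ht1 : B 0 hpos ≠ c (Sum.inl ((⟨n - 1, hn1⟩ : Fin n), (2 : ZMod 3))) :=
    c.valid (replicateSet_adj_ll (W := W) htwist)
  have ht2 : B' 0 hpos ≠ c (Sum.inl ((⟨n - 1, hn1⟩ : Fin n), (2 : ZMod 3))) :=
    c.valid (replicateSet_adj_rl (a := w 0 hpos) (Or.inl htwist))
  rcases hdP with hd | hd
  · exact ht1 hd.symm
  · exact ht2 hd.symm
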